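/- Let q ≥ 3 be a prime power such that q - 1 admits an odd prime divisor. Then the set of monic irreducible polynomials f ∈ 𝔽_q[X] such that f + 1 is also irreducible is infinite. -/

import Mathlib

open Polynomial Finset

lemma exists_good_elt
    (q : ℕ) (hq : 3 ≤ q)
    (F : Type*) [Field F] [Fintype F] (hcard : Fintype.card F = q)
    (ℓ : ℕ) (hℓ : ℓ.Prime) (hℓodd : Odd ℓ) (hdvd : ℓ ∣ q - 1) :
    ∃ a : F, (∀ b : F, b ^ ℓ ≠ a) ∧ (∀ b : F, b ^ ℓ ≠ a - 1) := by
  classical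
  obtain ⟨m, hm⟩ := hdvd
  have hℓ3 : 3 ≤ ℓ := by
    have h1 := hℓ.two_le
    have h2 := Nat.odd_iff.mp hℓodd
    omega
  have hm1 : 1 ≤ m := by
    rcases Nat.eq_zero_or_pos m with h | h
    · subst h; omega
    · exact h
  have : Fact ℓ.Prime := ⟨hℓ⟩
  -- a primitive ℓ-th root of unity
  obtain ⟨u, hu⟩ : ∃ u : Fˣ, orderOf u = ℓ :=
    exists_prime_orderOf_dvd_card ℓ (by rw [Fintype.card_units, hcard, hm]; exact ⟨m, rfl⟩)
  set ζ : F := (u : F) with hζ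
  have hζord : orderOf ζ = ℓ := by rw [hζ, orderOf_units, hu]
  have hζpow : ζ ^ ℓ = 1 := by rw [← hζord]; exact pow_orderOf_eq_one ζ
  -- the set of nonzero ℓ-th powers
  set s : Finset F := Finset.univ \ {0} with hs
  have hscard : s.card = q - 1 := by
    rw [hs, Finset.card_sdiff_of_subset (by simp), Finset.card_univ, hcard, Finset.card_singleton]
  set t : Finset F := s.image (· ^ ℓ) with ht
  -- every fiber over `t` has at least `ℓ` elements
  have hfiber : ∀ c ∈ t, ℓ ≤ (s.filter (fun x => x ^ ℓ = c)).card := by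
    intro c hc
    rw [ht, Finset.mem_image] at hc
    obtain ⟨x, hx, rfl⟩ := hc
    have hx0 : x ≠ 0 := by
      rw [hs, Finset.mem_sdiff, Finset.mem_singleton] at hx
      exact hx.2
    have : (Finset.range ℓ).image (fun i => x * ζ ^ i) ⊆
        s.filter (fun y => y ^ ℓ = x ^ ℓ) := by
      intro y hy
      rw [Finset.mem_image] at hy
      obtain ⟨i, _, rfl⟩ := hy
      rw [Finset.mem_filter]
      refine ⟨?_, ?_⟩
      · rw [hs, Finset.mem_sdiff, Finset.mem_singleton]
        refine ⟨Finset.mem_univ _, ?_⟩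
        have : ζ ≠ 0 := u.ne_zero
        exact mul_ne_zero hx0 (pow_ne_zero _ this)
      · rw [mul_pow, ← pow_mul, mul_comm i ℓ, pow_mul, hζpow, one_pow, mul_one]
    calc ℓ = ((Finset.range ℓ).image (fun i => x * ζ ^ i)).card := by
            rw [Finset.card_image_of_injOn, Finset.card_range]
            intro i hi j hj hij
            simp only [Finset.coe_range, Set.mem_Iio] at hi hj
            have hx' : ζ ^ i = ζ ^ j := by
              exact mul_left_cancel₀ hx0 hij
            exact pow_injOn_Iio_orderOf (by rwa [hζord]) (by rwa [hζord]) hx'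
      _ ≤ _ := Finset.card_le_card this
  -- hence `t` has at most `m` elements
  have htcard : t.card ≤ m := by
    have h1 : ∑ c ∈ t, (s.filter (fun x => x ^ ℓ = c)).card = s.card :=
      (Finset.card_eq_sum_card_fiberwise (fun x hx => Finset.mem_image_of_mem _ hx)).symm
    have h2 : ℓ * t.card ≤ s.card := by
      rw [← h1]
      calc ℓ * t.card = ∑ _c ∈ t, ℓ := by rw [Finset.sum_const, smul_eq_mul, mul_comm]
        _ ≤ _ := Finset.sum_le_sum hfiber
    rw [hscard, hm] at h2
    exact Nat.le_of_mul_le_mul_left h2 (by omega)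
  -- the set of all ℓ-th powers
  set P : Finset F := Finset.univ.image (· ^ ℓ) with hP
  have hPsub : P ⊆ insert 0 t := by
    intro c hc
    rw [hP, Finset.mem_image] at hc
    obtain ⟨x, _, rfl⟩ := hc
    by_cases hx0 : x = 0
    · subst hx0
      simp [zero_pow (by omega : ℓ ≠ 0)]
    · refine Finset.mem_insert_of_mem ?_
      rw [ht, Finset.mem_image]
      exact ⟨x, by simp [hs, hx0], rfl⟩
  have hPcard : P.card ≤ m + 1 := by
    calc P.card ≤ (insert 0 t).card := Finset.card_le_card hPsub
      _ ≤ t.card + 1 := Finset.card_insert_le _ _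
      _ ≤ m + 1 := by omega
  -- the bad set
  set B : Finset F := P ∪ P.image (· + 1) with hB
  have h1P : (1 : F) ∈ P := by
    rw [hP, Finset.mem_image]; exact ⟨1, Finset.mem_univ _, one_pow ℓ⟩
  have h1P' : (1 : F) ∈ P.image (· + 1) := by
    rw [Finset.mem_image]
    refine ⟨0, ?_, by simp⟩
    rw [hP, Finset.mem_image]
    exact ⟨0, Finset.mem_univ _, zero_pow (by omega : ℓ ≠ 0)⟩
  have hBcard : B.card < q := by
    have h1 : B.card + (P ∩ P.image (· + 1)).card = P.card + (P.image (· + 1)).card :=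
      Finset.card_union_add_card_inter _ _
    have h2 : 1 ≤ (P ∩ P.image (· + 1)).card :=
      Finset.card_pos.mpr ⟨1, Finset.mem_inter.mpr ⟨h1P, h1P'⟩⟩
    have h3 : (P.image (· + 1)).card ≤ P.card := Finset.card_image_le
    have : B.card ≤ 2 * (m + 1) - 1 := by omega
    have hq' : q = ℓ * m + 1 := by omega
    nlinarith
  obtain ⟨a, ha⟩ : ∃ a : F, a ∉ B := by
    have : (Bᶜ).Nonempty := by
      rw [← Finset.card_pos, Finset.card_compl, hcard]
      omega
    obtain ⟨a, ha⟩ := this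
    exact ⟨a, Finset.mem_compl.mp ha⟩
  refine ⟨a, ?_, ?_⟩
  · intro b hb
    apply ha
    rw [hB, Finset.mem_union]
    exact Or.inl (by rw [hP, Finset.mem_image]; exact ⟨b, Finset.mem_univ _, hb⟩)
  · intro b hb
    apply ha
    rw [hB, Finset.mem_union]
    refine Or.inr ?_
    rw [Finset.mem_image]
    refine ⟨a - 1, ?_, by ring⟩
    rw [hP, Finset.mem_image]
    exact ⟨b, Finset.mem_univ _, hb⟩

/-- If `q - 1` admits an odd prime divisor, then the set of monic irreducible polynomials
`f` over `𝔽_q` such that `f + 1` is also irreducible is infinite. -/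
theorem infinitely_many_twin_primes
    (q : ℕ) (hq : 3 ≤ q) (hq' : IsPrimePow q)
    (F : Type*) [Field F] [Fintype F] (hcard : Fintype.card F = q)
    (ℓ : ℕ) (hℓ : ℓ.Prime) (hℓodd : Odd ℓ) (hdvd : ℓ ∣ q - 1) :
    {f : F[X] | f.Monic ∧ Irreducible f ∧ Irreducible (f + 1)}.Infinite := by
  obtain ⟨a, ha, ha'⟩ := exists_good_elt q hq F hcard ℓ hℓ hℓodd hdvd
  have hℓ2 : ℓ ≠ 2 := by
    intro h; subst h; exact (Nat.not_odd_iff_even.mpr even_two) hℓodd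
  apply Set.infinite_of_injective_forall_mem
    (f := fun k : ℕ => (X : F[X]) ^ ℓ ^ (k + 1) - C a)
  · intro i j hij
    have := congrArg Polynomial.natDegree hij
    rw [natDegree_X_pow_sub_C, natDegree_X_pow_sub_C] at this
    have := Nat.pow_right_injective hℓ.two_le this
    omega
  · intro k
    have hne : ℓ ^ (k + 1) ≠ 0 := pow_ne_zero _ hℓ.ne_zero
    refine ⟨monic_X_pow_sub_C a hne, ?_, ?_⟩
    · exact X_pow_sub_C_irreducible_of_prime_pow hℓ hℓ2 (k + 1) ha
    · have heq : (X : F[X]) ^ ℓ ^ (k + 1) - C a + 1 = X ^ ℓ ^ (k + 1) - C (a - 1) := by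
        rw [map_sub, map_one]; ring
      rw [heq]
      exact X_pow_sub_C_irreducible_of_prime_pow hℓ hℓ2 (k + 1) ha'
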